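/- Let p ∈ (0,1) and let L : ℝ^m → ℝ be a nonnegative differentiable function whose gradient is (α, β, p)-semi-Lipschitz. Then L is (α, β/2, p/2)-semi-smooth: for all x, y ∈ ℝ^m, L(y) ≤ L(x) + ⟨∇L(x), y − x⟩ + (β/2)‖y − x‖² + α‖x − y‖^{2−p} L(x)^{p/2}. -/

import Mathlib

open scoped RealInnerProductSpace

/-- A nonnegative differentiable function with `(α, β, p)`-semi-Lipschitz gradient
is `(α, β/2, p/2)`-semi-smooth. -/
theorem semi_lipschitz_gradient_implies_semi_smooth
    {E : Type*} [NormedAddCommGroup E] [InnerProductSpace ℝ E]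
    [FiniteDimensional ℝ E]
    (L : E → ℝ) (α β p : ℝ)
    (hdiff : Differentiable ℝ L)
    (hp : p ∈ Set.Ioo (0 : ℝ) 1)
    (hα : 0 ≤ α) (hβ : 0 ≤ β)
    (hnonneg : ∀ x : E, 0 ≤ L x)
    (hsl : ∀ x y : E, ‖gradient L x - gradient L y‖ ^ 2
      ≤ β ^ 2 * ‖x - y‖ ^ 2 + α ^ 2 * ‖x - y‖ ^ (2 - 2 * p) * L x ^ p) :
    ∀ x y : E, L y ≤ L x + ⟪gradient L x, y - x⟫ + β / 2 * ‖y - x‖ ^ 2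
      + α * ‖x - y‖ ^ (2 - p) * L x ^ (p / 2) := by
  intro x y
  obtain ⟨hp0, hp1⟩ := hp
  set v : E := y - x with hv
  set g : E := gradient L x with hg
  -- the constant C = α * ‖v‖^(2-p) * L x ^ (p/2)
  set C : ℝ := α * ‖v‖ ^ (2 - p) * L x ^ (p / 2) with hC
  have hLx : (0:ℝ) ≤ L x := hnonneg x
  have hC0 : 0 ≤ C := by positivity
  -- pointwise inner product bound along the segment
  have key : ∀ t : ℝ, t ∈ Set.Icc (0:ℝ) 1 →
      ⟪gradient L (x + t • v) - g, v⟫ ≤ β * t * ‖v‖ ^ 2 + C := by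
    intro t ⟨ht0, ht1⟩
    rcases eq_or_ne v 0 with hv0 | hv0
    · simp only [hv0, norm_zero, inner_zero_right]
      positivity
    have hvpos : (0:ℝ) < ‖v‖ := norm_pos_iff.mpr hv0
    have hxy : x - (x + t • v) = -(t • v) := by abel
    have hd2 := hsl x (x + t • v)
    rw [hxy, norm_neg, norm_smul, Real.norm_eq_abs, abs_of_nonneg ht0] at hd2
    set A : ℝ := β * (t * ‖v‖) with hA
    set B : ℝ := α * (t * ‖v‖) ^ (1 - p) * L x ^ (p / 2) with hB
    have hA0 : 0 ≤ A := by positivity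
    have htv0 : 0 ≤ t * ‖v‖ := by positivity
    have hB0 : 0 ≤ B := by positivity
    have hsq : ‖g - gradient L (x + t • v)‖ ^ 2 ≤ (A + B) ^ 2 := by
      have hexp : (t * ‖v‖) ^ (2 - 2*p) = ((t * ‖v‖) ^ (1 - p)) ^ 2 := by
        rw [← Real.rpow_natCast ((t * ‖v‖) ^ (1 - p)) 2, ← Real.rpow_mul htv0]
        norm_num
        ring_nf
      have hexp2 : L x ^ p = (L x ^ (p / 2)) ^ 2 := by
        rw [← Real.rpow_natCast (L x ^ (p / 2)) 2, ← Real.rpow_mul hLx]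
        norm_num
      calc ‖g - gradient L (x + t • v)‖ ^ 2
          ≤ β ^ 2 * (t * ‖v‖) ^ 2 + α ^ 2 * (t * ‖v‖) ^ (2 - 2*p) * L x ^ p := hd2
        _ = A ^ 2 + B ^ 2 := by rw [hexp, hexp2]; ring
        _ ≤ (A + B) ^ 2 := by nlinarith [mul_nonneg hA0 hB0]
    have hnorm : ‖gradient L (x + t • v) - g‖ ≤ A + B := by
      rw [norm_sub_rev]
      have := Real.sqrt_le_sqrt hsq
      rwa [Real.sqrt_sq (norm_nonneg _), Real.sqrt_sq (by positivity : (0:ℝ) ≤ A + B)] at this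
    have hinner : ⟪gradient L (x + t • v) - g, v⟫ ≤ (A + B) * ‖v‖ := by
      calc ⟪gradient L (x + t • v) - g, v⟫ ≤ ‖gradient L (x + t • v) - g‖ * ‖v‖ :=
            real_inner_le_norm _ _
        _ ≤ (A + B) * ‖v‖ := by
            exact mul_le_mul_of_nonneg_right hnorm (norm_nonneg v)
    refine hinner.trans ?_
    have hBle : B * ‖v‖ ≤ C := by
      have h1 : (t * ‖v‖) ^ (1 - p) = t ^ (1-p) * ‖v‖ ^ (1-p) :=
        Real.mul_rpow ht0 (norm_nonneg v)
      have h2 : t ^ (1-p) ≤ 1 := Real.rpow_le_one ht0 ht1 (by linarith)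
      have h3 : ‖v‖ ^ (1-p) * ‖v‖ = ‖v‖ ^ (2-p) := by
        nth_rewrite 2 [← Real.rpow_one ‖v‖]
        rw [← Real.rpow_add hvpos]
        congr 1
        ring
      calc B * ‖v‖ = α * (t^(1-p)) * (‖v‖^(1-p) * ‖v‖) * L x ^ (p/2) := by
            rw [hB, h1]; ring
        _ = (α * (‖v‖^(2-p)) * L x ^ (p/2)) * t^(1-p) := by rw [h3]; ring
        _ ≤ (α * (‖v‖^(2-p)) * L x ^ (p/2)) * 1 := by
            refine mul_le_mul_of_nonneg_left h2 ?_
            positivity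
        _ = C := by rw [hC]; ring
    calc (A + B) * ‖v‖ = β * t * ‖v‖^2 + B * ‖v‖ := by rw [hA]; ring
      _ ≤ β * t * ‖v‖^2 + C := by linarith
  -- the function along the segment
  set f : ℝ → ℝ := fun t => L (x + t • v) - t * ⟪g, v⟫ - β / 2 * t ^ 2 * ‖v‖ ^ 2 - C * t with hf
  have hfd : ∀ t : ℝ, HasDerivAt f
      (⟪gradient L (x + t • v), v⟫ - ⟪g, v⟫ - β * t * ‖v‖ ^ 2 - C) t := by
    intro t
    have hc : HasDerivAt (fun t : ℝ => x + t • v) v t := by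
      simpa using ((hasDerivAt_id t).smul_const v).const_add x
    have hL : HasFDerivAt L (InnerProductSpace.toDual ℝ E (gradient L (x + t • v))) (x + t • v) :=
      (hdiff _).hasGradientAt
    have h1 : HasDerivAt (fun t : ℝ => L (x + t • v)) ⟪gradient L (x + t • v), v⟫ t := by
      have := hL.comp_hasDerivAt t hc
      rw [InnerProductSpace.toDual_apply_apply] at this
      exact this
    have h2 : HasDerivAt (fun t : ℝ => t * ⟪g, v⟫) ⟪g, v⟫ t := by
      simpa using (hasDerivAt_id t).mul_const ⟪g, v⟫
    have h3 : HasDerivAt (fun t : ℝ => β / 2 * t ^ 2 * ‖v‖ ^ 2) (β * t * ‖v‖ ^ 2) t := by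
      have : HasDerivAt (fun t : ℝ => t ^ 2) (2 * t) t := by
        simpa using hasDerivAt_pow 2 t
      have := (this.const_mul (β / 2)).mul_const (‖v‖ ^ 2)
      exact this.congr_deriv (by ring)
    have h4 : HasDerivAt (fun t : ℝ => C * t) C t := by
      simpa using (hasDerivAt_id t).const_mul C
    exact ((h1.sub h2).sub h3).sub h4
  have hanti : AntitoneOn f (Set.Icc (0:ℝ) 1) := by
    apply antitoneOn_of_deriv_nonpos (convex_Icc 0 1)
    · exact fun t _ => (hfd t).differentiableAt.continuousAt.continuousWithinAt
    · exact fun t _ => (hfd t).differentiableAt.differentiableWithinAt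
    · intro t ht
      rw [interior_Icc] at ht
      rw [(hfd t).deriv]
      have := key t ⟨le_of_lt ht.1, le_of_lt ht.2⟩
      rw [inner_sub_left] at this
      linarith
  have h01 : f 1 ≤ f 0 := hanti (Set.left_mem_Icc.mpr zero_le_one)
    (Set.right_mem_Icc.mpr zero_le_one) zero_le_one
  simp only [hf, one_smul, zero_smul, add_zero, one_pow, mul_one, mul_zero, zero_mul,
    zero_pow, sub_zero] at h01
  have hyx : x + v = y := by rw [hv]; abel
  rw [hyx] at h01
  have hC' : C = α * ‖x - y‖ ^ (2 - p) * L x ^ (p / 2) := by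
    rw [hC, norm_sub_rev]
  have hvn : ‖v‖ = ‖y - x‖ := rfl
  nlinarith [h01]
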